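/- There exists a constant C > 0 such that for every (q₀,p₀) ∈ [0,1)², every m ∈ ℕ, every n ∈ ℕ and every h ∈ (0,1], setting I₁ = [q₀+m−1, q₀+m+1], I₂ = [q₀+m/2−1, q₀+3m/2+1] \ I₁ and I₃ = ℝ \ (I₁ ∪ I₂): | ∫_{I₃} (F_n^h(x) − L^h(n)(x))·conj(Φ^h_{(q₀+m, p₀+p(m))}(x)) dx | ≤ C·λ^{−n/2}·e^{−m²/(4h)}. -/

import Mathlib

open Real Complex MeasureTheory

noncomputable section

/-- Quantized translation `T^h_{(a,b)}`. -/
def Tq (h a b : ℝ) (u : ℝ → ℂ) : ℝ → ℂ := fun x =>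
  Complex.exp ((-(Real.pi * a * b / h) : ℝ) * Complex.I) *
    (Complex.exp ((2 * Real.pi * b * x / h : ℝ) * Complex.I) * u (x - a))

/-- Gaussian wave packet `Φ^h_{(q,p)}`. -/
def WP (h q p : ℝ) : ℝ → ℂ := fun x =>
  (((2 / h) ^ ((1 : ℝ) / 4) : ℝ) : ℂ) *
    (Complex.exp ((2 * Real.pi * p * (x - q) / h : ℝ) * Complex.I) *
      Complex.exp ((-(Real.pi * (x - q) ^ 2 / h) : ℝ) : ℂ))

/-- The L² inner product `⟨f, g⟩ = ∫ f x * conj (g x)`. -/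
def ip (f g : ℝ → ℂ) : ℂ := ∫ x : ℝ, f x * (starRingEnd ℂ) (g x)

/-- The `h`-Fourier transform. -/
def Fh (h : ℝ) (f : ℝ → ℂ) : ℝ → ℂ := fun ξ =>
  ((h : ℂ))⁻¹ * ∫ x : ℝ, Complex.exp ((-(2 * Real.pi * x * ξ / h) : ℝ) * Complex.I) * f x

/-- The metaplectic operator of the matrix `[[a,b],[c,d]]`. -/
def Mhat (h a b c d : ℝ) (f : ℝ → ℂ) : ℝ → ℂ := fun x =>
  ((Real.sqrt a)⁻¹ : ℂ) *
    ∫ ξ : ℝ,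
      Complex.exp ((2 * Real.pi * ((c * x ^ 2 - b * ξ ^ 2 + 2 * x * ξ) / (2 * a)) / h : ℝ) *
        Complex.I) * Fh h f ξ

/-- The large eigenvalue `λ = (3+√5)/2` of the cat map. -/
def lam : ℝ := (3 + Real.sqrt 5) / 2

/-- The angle `θ` of the unstable direction: `tan θ = (√5−1)/2`. -/
def θc : ℝ := Real.arctan ((Real.sqrt 5 - 1) / 2)

/-- entry `a_n` of `Mⁿ`. -/
def an (n : ℕ) : ℝ := Real.cos θc ^ 2 * lam ^ (n : ℤ) + Real.sin θc ^ 2 * lam ^ (-(n : ℤ))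

/-- entry `b_n = c_n` of `Mⁿ`. -/
def bn (n : ℕ) : ℝ := Real.cos θc * Real.sin θc * (lam ^ (n : ℤ) - lam ^ (-(n : ℤ)))

/-- entry `d_n` of `Mⁿ`. -/
def dn (n : ℕ) : ℝ := Real.sin θc ^ 2 * lam ^ (n : ℤ) + Real.cos θc ^ 2 * lam ^ (-(n : ℤ))

/-- `γ_n = b_n / a_n`. -/
def gn (n : ℕ) : ℝ := bn n / an n

/-- `β = (1 + 2i tan θ)/cos² θ`. -/
def βc : ℂ := (1 + 2 * Complex.I * (Real.tan θc : ℂ)) / ((Real.cos θc : ℂ)) ^ 2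

/-- `A_n = (a_n² (1 − i γ_n))⁻¹ − i γ_n`. -/
def An (n : ℕ) : ℂ := (((an n : ℂ)) ^ 2 * (1 - Complex.I * (gn n : ℂ)))⁻¹ - Complex.I * (gn n : ℂ)

/-- The L² normalizing constant `C(h,n)` of the Gaussian `e^{-(π/h) A_n x²}`. -/
def Chn (h : ℝ) (n : ℕ) : ℝ := (2 * (An n).re / h) ^ ((1 : ℝ) / 4)

/-- The propagated wave packet in closed form, `F_n^h`. -/
def Fnh (h : ℝ) (n : ℕ) : ℝ → ℂ := fun x =>
  (Chn h n : ℂ) * Complex.exp (-((Real.pi / h : ℝ) : ℂ) * An n * (x : ℂ) ^ 2)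

/-- The damped Lagrangian state `L^h(n)`. -/
def Lhn (h : ℝ) (n : ℕ) : ℝ → ℂ := fun x =>
  (Chn h n : ℂ) * Complex.exp ((Real.pi * Real.tan θc * x ^ 2 / h : ℝ) * Complex.I) *
    Complex.exp (-((Real.pi : ℝ) : ℂ) * βc * (x : ℂ) ^ 2 / ((h * lam ^ (2 * n) : ℝ) : ℂ))

/-- The metaplectic operator of `Mⁿ`. -/
def MhatN (h : ℝ) (n : ℕ) : (ℝ → ℂ) → (ℝ → ℂ) := Mhat h (an n) (bn n) (bn n) (dn n)

/-- Membership in `D_θ`, the closed `cos(θ)/2`-neighborhood of the line `ξ = tan θ · x`. -/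
def inD (q p : ℝ) : Prop := |q * Real.sin θc - p * Real.cos θc| ≤ Real.cos θc / 2

lemma lam_pos : 0 < lam := by
  have : 0 ≤ Real.sqrt 5 := Real.sqrt_nonneg 5
  unfold lam; linarith

lemma cosθ_pos : 0 < Real.cos θc :=
  Real.cos_pos_of_mem_Ioo (Real.arctan_mem_Ioo _)

lemma an_pos (n : ℕ) : 0 < an n := by
  have h1 : 0 < lam ^ (n : ℤ) := zpow_pos lam_pos _
  have h2 : 0 < lam ^ (-(n : ℤ)) := zpow_pos lam_pos _
  have hc := cosθ_pos
  unfold an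
  nlinarith [mul_pos (pow_pos hc 2) h1, mul_nonneg (sq_nonneg (Real.sin θc)) h2.le]

lemma an_ge (n : ℕ) : Real.cos θc ^ 2 * lam ^ n ≤ an n := by
  have h2 : 0 < lam ^ (-(n : ℤ)) := zpow_pos lam_pos _
  unfold an
  rw [zpow_natCast]
  nlinarith [sq_nonneg (Real.sin θc)]

lemma An_re_eq (n : ℕ) : (An n).re = 1 / (an n ^ 2 * (1 + gn n ^ 2)) := by
  have ha : an n ≠ 0 := ne_of_gt (an_pos n)
  unfold An
  rw [show ((an n : ℂ)) ^ 2 = ((an n ^ 2 : ℝ) : ℂ) by push_cast; ring]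
  simp only [Complex.sub_re, Complex.inv_re, Complex.normSq_apply, Complex.mul_re,
    Complex.mul_im, Complex.ofReal_re, Complex.ofReal_im, Complex.one_re, Complex.one_im,
    Complex.I_re, Complex.I_im, Complex.sub_im]
  have hp := an_pos n
  have h4 : (0:ℝ) < an n ^ 4 := pow_pos hp 4
  have hg : (0:ℝ) < an n ^ 4 + an n ^ 4 * gn n ^ 2 :=
    lt_add_of_pos_of_le h4 (mul_nonneg h4.le (sq_nonneg _))
  have hg' : an n ^ 2 * an n ^ 2 + an n ^ 2 * gn n * (an n ^ 2 * gn n) ≠ 0 := by nlinarith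
  field_simp
  ring_nf
  rw [← add_mul, show an n ^ 4 * gn n ^ 2 + an n ^ 4 = an n ^ 4 + an n ^ 4 * gn n ^ 2 by ring,
    mul_inv_cancel₀ hg.ne']

lemma An_re_pos (n : ℕ) : 0 < (An n).re := by
  rw [An_re_eq]
  have := an_pos n
  positivity

def Kc : ℝ := (Real.cos θc ^ 2 * Real.cos θc ^ 2)⁻¹

lemma Kc_pos : 0 < Kc := by
  have := cosθ_pos; unfold Kc; positivity

lemma An_re_le (n : ℕ) : (An n).re ≤ Kc * ((lam ^ n) ^ 2)⁻¹ := by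
  rw [An_re_eq]
  have hc := cosθ_pos
  have hl : 0 < lam ^ n := pow_pos lam_pos n
  have h1 : Real.cos θc ^ 2 * lam ^ n ≤ an n := an_ge n
  have h2 : 0 < Real.cos θc ^ 2 * lam ^ n := by positivity
  have h3 : (Real.cos θc ^ 2 * lam ^ n) ^ 2 ≤ an n ^ 2 * (1 + gn n ^ 2) := by
    nlinarith [sq_nonneg (gn n), sq_nonneg (an n)]
  have h4 : 0 < (Real.cos θc ^ 2 * lam ^ n) ^ 2 := by positivity
  calc 1 / (an n ^ 2 * (1 + gn n ^ 2)) ≤ 1 / (Real.cos θc ^ 2 * lam ^ n) ^ 2 := by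
        apply one_div_le_one_div_of_le h4 h3
    _ = Kc * ((lam ^ n) ^ 2)⁻¹ := by
        unfold Kc; field_simp

lemma βc_re_nonneg : 0 ≤ βc.re := by
  unfold βc
  rw [show ((Real.cos θc : ℂ)) ^ 2 = ((Real.cos θc ^ 2 : ℝ) : ℂ) by push_cast; ring,
    Complex.div_ofReal_re]
  have hc := cosθ_pos
  have : (1 + 2 * Complex.I * (Real.tan θc : ℂ)).re = 1 := by simp
  rw [this]
  positivity

lemma Chn_nonneg (h : ℝ) (hh : 0 < h) (n : ℕ) : 0 ≤ Chn h n :=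
  Real.rpow_nonneg (div_nonneg (by linarith [An_re_pos n]) hh.le) _


lemma norm_ofReal_exp_mul_I (a : ℝ) : ‖Complex.exp ((a : ℂ) * Complex.I)‖ = 1 := by
  rw [Complex.norm_exp_ofReal_mul_I]

lemma norm_ofReal_exp (a : ℝ) : ‖Complex.exp ((a : ℝ) : ℂ)‖ = Real.exp a := by
  rw [← Complex.ofReal_exp, Complex.norm_real, Real.norm_eq_abs,
    _root_.abs_of_nonneg (Real.exp_pos a).le]

lemma norm_WP (h q p : ℝ) (hh : 0 < h) (x : ℝ) :
    ‖WP h q p x‖ = (2 / h) ^ ((1 : ℝ) / 4) * Real.exp (-(Real.pi * (x - q) ^ 2 / h)) := by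
  have h0 : (0:ℝ) ≤ (2 / h) ^ ((1 : ℝ) / 4) := Real.rpow_nonneg (by positivity) _
  unfold WP
  rw [norm_mul, norm_mul, norm_ofReal_exp_mul_I, norm_ofReal_exp, Complex.norm_real,
    Real.norm_eq_abs, _root_.abs_of_nonneg h0, one_mul]

lemma norm_Fnh_le (h : ℝ) (hh : 0 < h) (n : ℕ) (x : ℝ) : ‖Fnh h n x‖ ≤ Chn h n := by
  have hre : (-((Real.pi / h : ℝ) : ℂ) * An n * (x : ℂ) ^ 2).re
      = -(Real.pi / h * (An n).re * x ^ 2) := by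
    simp only [Complex.mul_re, Complex.mul_im, Complex.neg_re, Complex.neg_im,
      ← Complex.ofReal_pow, Complex.ofReal_re, Complex.ofReal_im]
    ring
  have hle : Real.exp ((-((Real.pi / h : ℝ) : ℂ) * An n * (x : ℂ) ^ 2).re) ≤ 1 := by
    rw [hre, ← Real.exp_zero]
    apply Real.exp_le_exp.mpr
    apply neg_nonpos.mpr
    have := (An_re_pos n).le
    have := Real.pi_pos.le
    positivity
  calc ‖Fnh h n x‖
      = Chn h n * Real.exp ((-((Real.pi / h : ℝ) : ℂ) * An n * (x : ℂ) ^ 2).re) := by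
        unfold Fnh
        rw [norm_mul, Complex.norm_real, Real.norm_eq_abs,
          _root_.abs_of_nonneg (Chn_nonneg h hh n), Complex.norm_exp]
    _ ≤ Chn h n * 1 := mul_le_mul_of_nonneg_left hle (Chn_nonneg h hh n)
    _ = Chn h n := mul_one _

lemma norm_Lhn_le (h : ℝ) (hh : 0 < h) (n : ℕ) (x : ℝ) : ‖Lhn h n x‖ ≤ Chn h n := by
  have hlp : (0:ℝ) < lam ^ (2 * n) := pow_pos lam_pos _
  have hre : (-((Real.pi : ℝ) : ℂ) * βc * (x : ℂ) ^ 2 / ((h * lam ^ (2 * n) : ℝ) : ℂ)).re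
      = -(Real.pi * βc.re * x ^ 2 / (h * lam ^ (2 * n))) := by
    rw [Complex.div_ofReal_re]
    simp only [Complex.mul_re, Complex.mul_im, Complex.neg_re, Complex.neg_im,
      ← Complex.ofReal_pow, Complex.ofReal_re, Complex.ofReal_im]
    ring
  have hle : Real.exp
      ((-((Real.pi : ℝ) : ℂ) * βc * (x : ℂ) ^ 2 / ((h * lam ^ (2 * n) : ℝ) : ℂ)).re) ≤ 1 := by
    rw [hre, ← Real.exp_zero]
    apply Real.exp_le_exp.mpr
    apply neg_nonpos.mpr
    have := βc_re_nonneg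
    have := Real.pi_pos.le
    positivity
  calc ‖Lhn h n x‖
      = Chn h n * 1 * Real.exp
        ((-((Real.pi : ℝ) : ℂ) * βc * (x : ℂ) ^ 2 / ((h * lam ^ (2 * n) : ℝ) : ℂ)).re) := by
        unfold Lhn
        rw [norm_mul, norm_mul, Complex.norm_real, Real.norm_eq_abs,
          _root_.abs_of_nonneg (Chn_nonneg h hh n), norm_ofReal_exp_mul_I,
          Complex.norm_exp]
    _ ≤ Chn h n * 1 * 1 :=
        mul_le_mul_of_nonneg_left hle (by simpa using Chn_nonneg h hh n)
    _ = Chn h n := by ring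

lemma Chn_le (h : ℝ) (hh : 0 < h) (n : ℕ) :
    Chn h n ≤ (2 * Kc) ^ ((1:ℝ)/4) * lam ^ (-(n : ℝ) / 2) * (h⁻¹) ^ ((1:ℝ)/4) := by
  have hl : (0:ℝ) ≤ lam := lam_pos.le
  have hln : (0:ℝ) < lam ^ n := pow_pos lam_pos n
  have hK := Kc_pos
  have step1 : Chn h n ≤ (2 * Kc * ((lam ^ n) ^ 2)⁻¹ * h⁻¹) ^ ((1:ℝ)/4) := by
    unfold Chn
    apply Real.rpow_le_rpow (div_nonneg (by linarith [An_re_pos n]) hh.le) ?_ (by norm_num)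
    rw [div_eq_mul_inv]
    have h1 : 2 * (An n).re ≤ 2 * (Kc * ((lam ^ n) ^ 2)⁻¹) := by linarith [An_re_le n]
    calc 2 * (An n).re * h⁻¹ ≤ 2 * (Kc * ((lam ^ n) ^ 2)⁻¹) * h⁻¹ :=
          mul_le_mul_of_nonneg_right h1 (by positivity)
      _ = 2 * Kc * ((lam ^ n) ^ 2)⁻¹ * h⁻¹ := by ring
  refine step1.trans_eq ?_
  rw [Real.mul_rpow (by positivity) (inv_nonneg.mpr hh.le),
      Real.mul_rpow (by positivity) (by positivity)]
  congr 1
  congr 1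
  rw [← pow_mul, ← Real.rpow_natCast lam (n * 2), ← Real.rpow_neg hl, ← Real.rpow_mul hl]
  congr 1
  push_cast
  ring

/-- estimate of the contribution of the far interval `I₃`. -/
theorem far_interval_estimate :
    ∃ C : ℝ, 0 < C ∧
      ∀ q₀ p₀ : ℝ, q₀ ∈ Set.Ico (0 : ℝ) 1 → p₀ ∈ Set.Ico (0 : ℝ) 1 →
      ∀ pm : ℕ → ℤ, (∀ m : ℕ, inD (q₀ + m) (p₀ + pm m)) →
      ∀ m n : ℕ, ∀ h : ℝ, 0 < h → h ≤ 1 →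
        ‖∫ x in Set.univ \ (Set.Icc (q₀ + m - 1) (q₀ + m + 1) ∪
            (Set.Icc (q₀ + m / 2 - 1) (q₀ + 3 * m / 2 + 1) \
              Set.Icc (q₀ + m - 1) (q₀ + m + 1))),
          (Fnh h n x - Lhn h n x) * (starRingEnd ℂ) (WP h (q₀ + m) (p₀ + pm m) x)‖ ≤
          C * lam ^ (-(n : ℝ) / 2) * Real.exp (-(m : ℝ) ^ 2 / (4 * h)) := by

  have hC4 : (0:ℝ) < (2 * Kc) ^ ((1:ℝ)/4) :=
    Real.rpow_pos_of_pos (by linarith [Kc_pos]) _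
  have h24 : (0:ℝ) < (2:ℝ) ^ ((1:ℝ)/4) := Real.rpow_pos_of_pos (by norm_num) _
  have hsp : (0:ℝ) < Real.sqrt (Real.pi / 2) :=
    Real.sqrt_pos.mpr (by positivity)
  refine ⟨2 * (2 * Kc) ^ ((1:ℝ)/4) * (2:ℝ) ^ ((1:ℝ)/4) * Real.sqrt (Real.pi / 2),
    by positivity, ?_⟩
  intro q₀ p₀ _ _ pm _ m n h hh h1
  set C : ℝ := 2 * (2 * Kc) ^ ((1:ℝ)/4) * (2:ℝ) ^ ((1:ℝ)/4) * Real.sqrt (Real.pi / 2) with hCdef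
  set q : ℝ := q₀ + m with hqdef
  set S : Set ℝ := Set.univ \ (Set.Icc (q₀ + m - 1) (q₀ + m + 1) ∪
      (Set.Icc (q₀ + m / 2 - 1) (q₀ + 3 * m / 2 + 1) \
        Set.Icc (q₀ + m - 1) (q₀ + m + 1))) with hSdef
  have hSm : MeasurableSet S := by
    apply MeasurableSet.diff MeasurableSet.univ
    exact (measurableSet_Icc.union (measurableSet_Icc.diff measurableSet_Icc))
  have hE : (0:ℝ) < Real.exp (-(m:ℝ) ^ 2 / (4 * h)) := Real.exp_pos _
  have hp2 : (0:ℝ) ≤ (2 / h) ^ ((1:ℝ)/4) := Real.rpow_nonneg (by positivity) _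
  have hchnn := Chn_nonneg h hh n
  set B : ℝ := 2 * Chn h n * (2 / h) ^ ((1:ℝ)/4) *
      (Real.exp (-(m:ℝ) ^ 2 / (4 * h)) * Real.sqrt h) with hBdef
  have hB0 : 0 ≤ B := by
    apply mul_nonneg (mul_nonneg (by linarith) hp2)
    exact mul_nonneg hE.le (Real.sqrt_nonneg h)
  have hgint : Integrable (fun x : ℝ => B * Real.exp (-2 * (x - q) ^ 2)) := by
    exact ((integrable_exp_neg_mul_sq (by norm_num : (0:ℝ) < 2)).comp_sub_right q).const_mul B
  -- pointwise bound on S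
  have hpt : ∀ x ∈ S, ‖(Fnh h n x - Lhn h n x) * (starRingEnd ℂ) (WP h q (p₀ + pm m) x)‖ ≤
      B * Real.exp (-2 * (x - q) ^ 2) := by
    intro x hx
    have hm0 : (0:ℝ) ≤ (m:ℝ) := Nat.cast_nonneg m
    have hxB : x ∉ Set.Icc (q₀ + m / 2 - 1) (q₀ + 3 * m / 2 + 1) := by
      intro hmem
      rcases hx with ⟨-, hx2⟩
      by_cases hA : x ∈ Set.Icc (q₀ + (m:ℝ) - 1) (q₀ + m + 1)
      · exact hx2 (Or.inl hA)
      · exact hx2 (Or.inr ⟨hmem, hA⟩)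
    have hs2 : (m:ℝ) ^ 2 / 4 + 1 ≤ (x - q) ^ 2 := by
      rw [Set.mem_Icc] at hxB
      push_neg at hxB
      by_cases hcase : q₀ + (m:ℝ) / 2 - 1 ≤ x
      · have hgt := hxB hcase
        nlinarith
      · push_neg at hcase
        nlinarith
    have hexp : Real.exp (-(Real.pi * (x - q) ^ 2 / h)) ≤
        Real.exp (-(m:ℝ) ^ 2 / (4 * h)) * (Real.sqrt h * Real.exp (-2 * (x - q) ^ 2)) := by
      have hsq : Real.exp (-(1/h)) ≤ Real.sqrt h := by
        have e1 : 1/h ≤ Real.exp (1/h) := by linarith [Real.add_one_le_exp (1/h)]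
        have e2 : Real.exp (-(1/h)) ≤ h := by
          rw [Real.exp_neg]
          calc (Real.exp (1/h))⁻¹ ≤ (1/h)⁻¹ := inv_anti₀ (by positivity) e1
            _ = h := by rw [one_div, inv_inv]
        have e3 : h ≤ Real.sqrt h := by
          rw [Real.sqrt_eq_rpow]
          calc h = h ^ (1:ℝ) := (Real.rpow_one h).symm
            _ ≤ h ^ ((1:ℝ)/2) :=
              Real.rpow_le_rpow_of_exponent_ge hh h1 (by norm_num)
        linarith
      have key : (m:ℝ) ^ 2 / 4 + 1 + 2 * (x - q) ^ 2 * h ≤ Real.pi * (x - q) ^ 2 := by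
        nlinarith [Real.pi_gt_three, sq_nonneg (x - q),
          mul_nonneg (sq_nonneg (x - q)) (sub_nonneg.mpr h1)]
      have key2 : (m:ℝ) ^ 2 / (4 * h) + 1/h + 2 * (x - q) ^ 2 ≤ Real.pi * (x - q) ^ 2 / h := by
        have e4 : ((m:ℝ) ^ 2 / 4 + 1 + 2 * (x - q) ^ 2 * h) / h
            = (m:ℝ) ^ 2 / (4 * h) + 1/h + 2 * (x - q) ^ 2 := by
          field_simp
        calc (m:ℝ) ^ 2 / (4 * h) + 1/h + 2 * (x - q) ^ 2
            = ((m:ℝ) ^ 2 / 4 + 1 + 2 * (x - q) ^ 2 * h) / h := e4.symm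
          _ ≤ Real.pi * (x - q) ^ 2 / h := by gcongr
      calc Real.exp (-(Real.pi * (x - q) ^ 2 / h))
          ≤ Real.exp (-(m:ℝ) ^ 2 / (4 * h) + (-(1/h)) + (-2 * (x - q) ^ 2)) := by
            apply Real.exp_le_exp.mpr
            have : -(m:ℝ) ^ 2 / (4 * h) = -((m:ℝ) ^ 2 / (4 * h)) := by ring
            linarith [key2]
        _ = Real.exp (-(m:ℝ) ^ 2 / (4 * h)) * (Real.exp (-(1/h)) * Real.exp (-2 * (x - q) ^ 2)) := by
            rw [Real.exp_add, Real.exp_add, mul_assoc]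
        _ ≤ Real.exp (-(m:ℝ) ^ 2 / (4 * h)) * (Real.sqrt h * Real.exp (-2 * (x - q) ^ 2)) := by
            apply mul_le_mul_of_nonneg_left _ hE.le
            exact mul_le_mul_of_nonneg_right hsq (Real.exp_pos _).le
    have hFL : ‖Fnh h n x - Lhn h n x‖ ≤ 2 * Chn h n :=
      (norm_sub_le _ _).trans (by linarith [norm_Fnh_le h hh n x, norm_Lhn_le h hh n x])
    calc ‖(Fnh h n x - Lhn h n x) * (starRingEnd ℂ) (WP h q (p₀ + pm m) x)‖
        = ‖Fnh h n x - Lhn h n x‖ * ((2 / h) ^ ((1:ℝ)/4) * Real.exp (-(Real.pi * (x - q) ^ 2 / h))) := by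
          rw [norm_mul, RCLike.norm_conj, norm_WP h q _ hh]
      _ ≤ (2 * Chn h n) * ((2 / h) ^ ((1:ℝ)/4) *
            (Real.exp (-(m:ℝ) ^ 2 / (4 * h)) * (Real.sqrt h * Real.exp (-2 * (x - q) ^ 2)))) := by
          apply mul_le_mul hFL (mul_le_mul_of_nonneg_left hexp hp2)
            (mul_nonneg hp2 (Real.exp_pos _).le) (by linarith)
      _ = B * Real.exp (-2 * (x - q) ^ 2) := by rw [hBdef]; ring
  have hbound : ∀ᵐ x ∂(volume.restrict S),
      ‖(Fnh h n x - Lhn h n x) * (starRingEnd ℂ) (WP h q (p₀ + pm m) x)‖ ≤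
        B * Real.exp (-2 * (x - q) ^ 2) :=
    (ae_restrict_iff' hSm).mpr (ae_of_all _ hpt)
  have h5 : ‖∫ x in S, (Fnh h n x - Lhn h n x) * (starRingEnd ℂ) (WP h q (p₀ + pm m) x)‖ ≤
      ∫ x in S, B * Real.exp (-2 * (x - q) ^ 2) :=
    norm_integral_le_of_norm_le hgint.restrict hbound
  have h6 : ∫ x in S, B * Real.exp (-2 * (x - q) ^ 2) ≤ ∫ x : ℝ, B * Real.exp (-2 * (x - q) ^ 2) :=
    setIntegral_le_integral hgint (ae_of_all _ fun x => mul_nonneg hB0 (Real.exp_pos _).le)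
  have h7 : ∫ x : ℝ, B * Real.exp (-2 * (x - q) ^ 2) = B * Real.sqrt (Real.pi / 2) := by
    rw [MeasureTheory.integral_const_mul]
    rw [show (∫ x : ℝ, Real.exp (-2 * (x - q) ^ 2))
        = ∫ x : ℝ, (fun t : ℝ => Real.exp (-2 * t ^ 2)) (x - q) from rfl]
    rw [integral_sub_right_eq_self (fun t : ℝ => Real.exp (-2 * t ^ 2)) q]
    rw [integral_gaussian]
  -- final assembly
  have hu : (0:ℝ) ≤ (h⁻¹) ^ ((1:ℝ)/4) := Real.rpow_nonneg (inv_nonneg.mpr hh.le) _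
  have hdiv : ((2:ℝ) / h) ^ ((1:ℝ)/4) = (2:ℝ) ^ ((1:ℝ)/4) * (h⁻¹) ^ ((1:ℝ)/4) := by
    rw [div_eq_mul_inv, Real.mul_rpow (by norm_num) (inv_nonneg.mpr hh.le)]
  have huu : (h⁻¹) ^ ((1:ℝ)/4) * (h⁻¹) ^ ((1:ℝ)/4) * Real.sqrt h = 1 := by
    rw [← Real.rpow_add (inv_pos.mpr hh), Real.sqrt_eq_rpow,
      show (1:ℝ)/4 + 1/4 = 1/2 from by norm_num, Real.inv_rpow hh.le]
    exact inv_mul_cancel₀ (Real.rpow_pos_of_pos hh _).ne'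
  have hR : (0:ℝ) ≤ 2 * ((2:ℝ) ^ ((1:ℝ)/4) * (h⁻¹) ^ ((1:ℝ)/4)) *
      (Real.exp (-(m:ℝ) ^ 2 / (4 * h)) * Real.sqrt h) * Real.sqrt (Real.pi / 2) := by
    apply mul_nonneg
    apply mul_nonneg
    · exact mul_nonneg (by norm_num) (mul_nonneg h24.le hu)
    · exact mul_nonneg hE.le (Real.sqrt_nonneg h)
    · exact hsp.le
  have hfin : B * Real.sqrt (Real.pi / 2) ≤
      C * lam ^ (-(n:ℝ) / 2) * Real.exp (-(m:ℝ) ^ 2 / (4 * h)) := by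
    calc B * Real.sqrt (Real.pi / 2)
        = Chn h n * (2 * ((2:ℝ) ^ ((1:ℝ)/4) * (h⁻¹) ^ ((1:ℝ)/4)) *
            (Real.exp (-(m:ℝ) ^ 2 / (4 * h)) * Real.sqrt h) * Real.sqrt (Real.pi / 2)) := by
          rw [hBdef, hdiv]; ring
      _ ≤ ((2 * Kc) ^ ((1:ℝ)/4) * lam ^ (-(n:ℝ) / 2) * (h⁻¹) ^ ((1:ℝ)/4)) *
            (2 * ((2:ℝ) ^ ((1:ℝ)/4) * (h⁻¹) ^ ((1:ℝ)/4)) *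
            (Real.exp (-(m:ℝ) ^ 2 / (4 * h)) * Real.sqrt h) * Real.sqrt (Real.pi / 2)) :=
          mul_le_mul_of_nonneg_right (Chn_le h hh n) hR
      _ = C * lam ^ (-(n:ℝ) / 2) * Real.exp (-(m:ℝ) ^ 2 / (4 * h)) *
            ((h⁻¹) ^ ((1:ℝ)/4) * (h⁻¹) ^ ((1:ℝ)/4) * Real.sqrt h) := by
          rw [hCdef]; ring
      _ = C * lam ^ (-(n:ℝ) / 2) * Real.exp (-(m:ℝ) ^ 2 / (4 * h)) := by
          rw [huu, mul_one]
  calc ‖∫ x in S, (Fnh h n x - Lhn h n x) * (starRingEnd ℂ) (WP h q (p₀ + pm m) x)‖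
      ≤ ∫ x in S, B * Real.exp (-2 * (x - q) ^ 2) := h5
    _ ≤ ∫ x : ℝ, B * Real.exp (-2 * (x - q) ^ 2) := h6
    _ = B * Real.sqrt (Real.pi / 2) := h7
    _ ≤ C * lam ^ (-(n:ℝ) / 2) * Real.exp (-(m:ℝ) ^ 2 / (4 * h)) := hfin
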